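/- Let n ≥ 1 and let σ be a finitely supported ℤ-linear combination of (n+1)-tuples of elements of SL(2,ℂ) such that every tuple (g₀,…,g_n) in the support of σ is good, i.e. gᵢ ≠ gⱼ and gᵢ ≠ −gⱼ for all i ≠ j, and such that ∂σ = 0, where ∂ is the simplicial boundary ∂(g₀,…,g_n) = Σᵢ(−1)ⁱ(g₀,…,ĝᵢ,…,g_n). Then there exists a finitely supported ℤ-linear combination τ of good (n+2)-tuples of elements of SL(2,ℂ) with ∂τ = σ. -/

import Mathlib

/-- The simplicial boundary `∂ : C_{n+1}(X) → C_n(X)`,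
`∂(g₀,…,g_{n+1}) = Σ_i (-1)^i (g₀,…,ĝ_i,…,g_{n+1})`. -/
noncomputable def simplicialBoundary (X : Type*) (n : ℕ) :
    ((Fin (n + 2) → X) →₀ ℤ) →ₗ[ℤ] ((Fin (n + 1) → X) →₀ ℤ) :=
  Finsupp.lift ((Fin (n + 1) → X) →₀ ℤ) ℤ (Fin (n + 2) → X) fun g =>
    ∑ i : Fin (n + 2), ((-1 : ℤ) ^ (i : ℕ)) • Finsupp.single (g ∘ i.succAbove) 1

/-- A tuple of elements of `SL(2,ℂ)` is good if `gᵢ ≠ ±gⱼ` for all `i ≠ j`. -/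
def GoodTuple {m : ℕ} (g : Fin m → Matrix.SpecialLinearGroup (Fin 2) ℂ) : Prop :=
  ∀ i j, i ≠ j → g i ≠ g j ∧
    (g i : Matrix (Fin 2) (Fin 2) ℂ) ≠ -(g j : Matrix (Fin 2) (Fin 2) ℂ)

local notation "SL2" => Matrix.SpecialLinearGroup (Fin 2) ℂ

lemma sB_single {X : Type*} (n : ℕ) (g : Fin (n+2) → X) :
    simplicialBoundary X n (Finsupp.single g 1) =
      ∑ i : Fin (n + 2), ((-1 : ℤ) ^ (i : ℕ)) • Finsupp.single (g ∘ i.succAbove) 1 := by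
  simp [simplicialBoundary]

lemma boundary_cone {X : Type*} (n : ℕ) (h : X) (σ : (Fin (n+2) → X) →₀ ℤ) :
    simplicialBoundary X (n+1) (Finsupp.mapDomain (Fin.cons h) σ)
      = σ - Finsupp.mapDomain (Fin.cons h) (simplicialBoundary X n σ) := by
  have key : ∀ g : Fin (n+2) → X,
      simplicialBoundary X (n+1) (Finsupp.mapDomain (Fin.cons h) (Finsupp.single g 1))
        = Finsupp.single g 1 -
          Finsupp.mapDomain (Fin.cons h) (simplicialBoundary X n (Finsupp.single g 1)) := by
    intro g
    rw [Finsupp.mapDomain_single, sB_single, sB_single]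
    rw [Fin.sum_univ_succ]
    have h0 : (Fin.cons h g : Fin (n+3) → X) ∘ (0 : Fin (n+3)).succAbove = g := by
      funext k; simp [Fin.succAbove_zero]
    rw [h0]
    have hs : ∀ j : Fin (n+2),
        (Fin.cons h g : Fin (n+3) → X) ∘ (j.succ).succAbove
          = Fin.cons h (g ∘ j.succAbove) := by
      intro j; funext k
      refine Fin.cases ?_ (fun l => ?_) k
      · simp [Fin.succ_succAbove_zero]
      · simp [Fin.succ_succAbove_succ]
    simp only [hs]
    rw [Finsupp.mapDomain_finset_sum]
    simp only [Finsupp.mapDomain_smul, Finsupp.mapDomain_single]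
    simp [pow_succ, sub_eq_add_neg, Finset.sum_neg_distrib, neg_smul]
  induction σ using Finsupp.induction_linear with
  | zero => simp
  | add f g hf hg =>
      rw [Finsupp.mapDomain_add, map_add, hf, hg, map_add, Finsupp.mapDomain_add]; abel
  | single a b =>
      have : (Finsupp.single a b : (Fin (n+2) → X) →₀ ℤ) = b • Finsupp.single a 1 := by
        simp [Finsupp.smul_single]
      rw [this, Finsupp.mapDomain_smul, map_smul, key, map_smul, Finsupp.mapDomain_smul,
        smul_sub]

noncomputable def negSL (A : SL2) : SL2 :=
  ⟨-(A : Matrix (Fin 2) (Fin 2) ℂ), by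
    rw [Matrix.det_neg]; simp [A.2]⟩

instance : Infinite SL2 := by
  refine Infinite.of_injective (fun t : ℂ => (⟨!![1, t; 0, 1], by
    simp [Matrix.det_fin_two_of]⟩ : SL2)) ?_
  intro a b hab
  have := congrArg (fun A : SL2 => (A : Matrix (Fin 2) (Fin 2) ℂ) 0 1) hab
  simpa using this

lemma good_cone {m : ℕ} (h : SL2) (g : Fin (m+1) → SL2) (hg : GoodTuple g)
    (hh : ∀ k, h ≠ g k ∧ (h : Matrix (Fin 2) (Fin 2) ℂ) ≠ -(g k : Matrix (Fin 2) (Fin 2) ℂ)) :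
    GoodTuple (Fin.cons h g) := by
  intro i j
  induction i using Fin.cases with
  | zero =>
    induction j using Fin.cases with
    | zero => intro hij; exact absurd rfl hij
    | succ l => intro _; simpa using hh l
  | succ k =>
    induction j using Fin.cases with
    | zero =>
      intro _
      refine ⟨fun e => (hh k).1 e.symm, fun e => (hh k).2 ?_⟩
      simp only [Fin.cons_succ, Fin.cons_zero] at e ⊢
      rw [e]; simp
    | succ l =>
      intro hij
      have := hg k l (fun e => hij (by rw [e]))
      simpa using this

/-- Every good cycle (of degree `≥ 1`) in `C_*^{good}(SL(2,ℂ))` is the boundary of a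
good chain. -/
theorem stmt17 (n : ℕ) (σ : (Fin (n + 2) → Matrix.SpecialLinearGroup (Fin 2) ℂ) →₀ ℤ)
    (hgood : ∀ g ∈ σ.support, GoodTuple g)
    (hcycle : simplicialBoundary (Matrix.SpecialLinearGroup (Fin 2) ℂ) n σ = 0) :
    ∃ τ : (Fin (n + 3) → Matrix.SpecialLinearGroup (Fin 2) ℂ) →₀ ℤ,
      (∀ g ∈ τ.support, GoodTuple g) ∧
      simplicialBoundary (Matrix.SpecialLinearGroup (Fin 2) ℂ) (n + 1) τ = σ := by
  classical
  set F : Finset SL2 := σ.support.biUnion (fun g => Finset.image g Finset.univ) with hF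
  obtain ⟨h, hhF⟩ := Infinite.exists_notMem_finset (F ∪ F.image negSL)
  refine ⟨Finsupp.mapDomain (Fin.cons h) σ, ?_, ?_⟩
  · intro g' hg'
    have := Finsupp.mapDomain_support hg'
    obtain ⟨g, hgs, rfl⟩ := Finset.mem_image.mp this
    refine good_cone h g (hgood g hgs) (fun k => ?_)
    have hmem : g k ∈ F := Finset.mem_biUnion.mpr ⟨g, hgs, Finset.mem_image_of_mem _ (Finset.mem_univ k)⟩
    constructor
    · intro e
      exact hhF (Finset.mem_union_left _ (e ▸ hmem))
    · intro e
      apply hhF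
      apply Finset.mem_union_right
      refine Finset.mem_image.mpr ⟨g k, hmem, ?_⟩
      exact (Subtype.ext e.symm : negSL (g k) = h)
  · rw [boundary_cone, hcycle, Finsupp.mapDomain_zero, sub_zero]
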